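/- arXiv:2108.08774 — 2 statements merged into one kernel-verified Lean document; each statement's English description precedes it below -/
import Mathlib

section
/- Let X be supported on 𝒳 = {x_1,...,x_n} with probabilities p_i := P_X(x_i) > 0, let 1 ≤ k < n, and let α ∈ (0,1)∪(1,∞). Then the minimal expected α-loss for k guesses equals the value of the finite-dimensional optimization problem: ME^{(k)}_α(P_X) = min over (t_1,...,t_n) ∈ ℝ^n with Σ_{i=1}^{n} t_i = k and 0 ≤ t_i ≤ 1 for all i, of (α/(α−1)) · Σ_{i=1}^{n} p_i · (1 − t_i^{(α−1)/α}). -/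
open Finset
open scoped ENNReal

/-- A `k`-guess strategy on `Fin n` is a probability mass function on `k`-tuples. -/
def IsStrategy {n k : ℕ} (Q : (Fin k → Fin n) → ℝ) : Prop :=
  (∀ a, 0 ≤ Q a) ∧ ∑ a, Q a = 1

/-- `succProb Q x` is the probability that at least one of the `k` guesses equals `x`. -/
noncomputable def succProb {n k : ℕ} (Q : (Fin k → Fin n) → ℝ) (x : Fin n) : ℝ :=
  ∑ a ∈ Finset.univ.filter (fun a : Fin k → Fin n => ∃ j, a j = x), Q a

/-- The `α`-loss `ℓ_α(t) = (α/(α-1))(1 - t^{(α-1)/α})`, valued in `ℝ≥0∞`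
(it is `+∞` at `t = 0` when `α < 1`). -/
noncomputable def alphaLoss (α t : ℝ) : ℝ≥0∞ :=
  if t = 0 ∧ α < 1 then ⊤
  else ENNReal.ofReal ((α / (α - 1)) * (1 - t ^ ((α - 1) / α)))

lemma succProb_comb {n k : ℕ} (c d : ℝ) (Q R : (Fin k → Fin n) → ℝ) (i : Fin n) :
    succProb (fun a => c * Q a + d * R a) i = c * succProb Q i + d * succProb R i := by
  simp [succProb, Finset.sum_add_distrib, Finset.mul_sum]

lemma achieve {n k : ℕ} :
    ∀ N : ℕ, ∀ t : Fin n → ℝ, (univ.filter fun i => 0 < t i ∧ t i < 1).card = N →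
      (∀ i, 0 ≤ t i ∧ t i ≤ 1) → (∑ i, t i = k) →
      ∃ Q : (Fin k → Fin n) → ℝ, IsStrategy Q ∧ ∀ i, succProb Q i = t i := by
  intro N
  induction N using Nat.strong_induction_on with
  | _ N IH =>
  intro t hcard hbd hsum
  by_cases hF : (univ.filter fun i => 0 < t i ∧ t i < 1) = ∅
  · -- base case: all coordinates are 0 or 1
    have hfrac : ∀ i, t i = 0 ∨ t i = 1 := by
      intro i
      have h := Finset.filter_eq_empty_iff.mp hF (Finset.mem_univ i)
      rcases eq_or_lt_of_le (hbd i).1 with h0 | h0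
      · exact Or.inl h0.symm
      · right
        by_contra h1
        exact h ⟨h0, lt_of_le_of_ne (hbd i).2 h1⟩
    set S := univ.filter fun i => t i = (1:ℝ) with hS
    have hsum' : ((S.card : ℕ) : ℝ) = (k : ℝ) := by
      rw [← hsum, ← Finset.sum_boole]
      apply Finset.sum_congr rfl
      intro i _
      rcases hfrac i with h | h <;> simp [h]
    have hSk : S.card = k := Nat.cast_injective hsum'
    set a : Fin k → Fin n := fun j => ((S.orderIsoOfFin hSk) j : Fin n) with ha
    have ha_mem : ∀ j, a j ∈ S := fun j => ((S.orderIsoOfFin hSk) j).2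
    have ha_surj : ∀ i, i ∈ S → ∃ j, a j = i := by
      intro i hi
      obtain ⟨j, hj⟩ := (S.orderIsoOfFin hSk).surjective ⟨i, hi⟩
      exact ⟨j, congrArg Subtype.val hj⟩
    refine ⟨fun b => if b = a then 1 else 0, ⟨fun b => by by_cases h : b = a <;> simp [h], by
      simp [Finset.sum_ite_eq']⟩, ?_⟩
    intro i
    unfold succProb
    rw [Finset.sum_ite_eq']
    simp only [Finset.mem_filter, Finset.mem_univ, true_and]
    split_ifs with h
    · obtain ⟨j, rfl⟩ := h
      exact ((Finset.mem_filter.mp (ha_mem j)).2).symm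
    · rcases hfrac i with h0 | h1
      · exact h0.symm
      · exact absurd (ha_surj i (Finset.mem_filter.mpr ⟨Finset.mem_univ i, h1⟩)) h
  · -- inductive step: at least one fractional coordinate
    obtain ⟨i, hi⟩ := Finset.nonempty_iff_ne_empty.mpr hF
    rw [Finset.mem_filter] at hi
    obtain ⟨-, hi0, hi1⟩ := hi
    -- find a second fractional coordinate
    have hj : ∃ j, j ≠ i ∧ 0 < t j ∧ t j < 1 := by
      by_contra hno
      push_neg at hno
      have hfrac : ∀ m, m ≠ i → t m = 0 ∨ t m = 1 := by
        intro m hm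
        rcases eq_or_lt_of_le (hbd m).1 with h0 | h0
        · exact Or.inl h0.symm
        · exact Or.inr (le_antisymm (hbd m).2 (hno m hm h0))
      set c := ((univ.erase i).filter fun m => t m = (1:ℝ)).card with hc
      have hsum2 : ∑ m ∈ univ.erase i, t m = (c : ℝ) := by
        rw [← Finset.sum_boole]
        apply Finset.sum_congr rfl
        intro m hm
        rcases hfrac m (Finset.ne_of_mem_erase hm) with h | h <;> simp [h]
      have hti : t i = (k : ℝ) - (c : ℝ) := by
        have := Finset.add_sum_erase univ t (Finset.mem_univ i)
        rw [hsum2, hsum] at this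
        linarith
      rcases le_or_gt k c with h | h
      · have : (k:ℝ) ≤ (c:ℝ) := Nat.cast_le.mpr h
        linarith
      · have : (c:ℝ) + 1 ≤ (k:ℝ) := by exact_mod_cast Nat.succ_le_of_lt h
        linarith
    obtain ⟨j, hji, hj0, hj1⟩ := hj
    have hij : i ≠ j := fun h => hji h.symm
    set ε₁ := min (1 - t i) (t j) with hε₁
    set ε₂ := min (t i) (1 - t j) with hε₂
    have hε₁0 : 0 < ε₁ := lt_min (by linarith) hj0
    have hε₂0 : 0 < ε₂ := lt_min hi0 (by linarith)
    set t1 : Fin n → ℝ := fun m => t m + (if m = i then ε₁ else 0) - (if m = j then ε₁ else 0) with ht1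
    set t2 : Fin n → ℝ := fun m => t m - (if m = i then ε₂ else 0) + (if m = j then ε₂ else 0) with ht2
    have ht1i : t1 i = t i + ε₁ := by simp [ht1, hij]
    have ht1j : t1 j = t j - ε₁ := by simp [ht1, hji]
    have ht1m : ∀ m, m ≠ i → m ≠ j → t1 m = t m := by intro m h1 h2; simp [ht1, h1, h2]
    have ht2i : t2 i = t i - ε₂ := by simp [ht2, hij]
    have ht2j : t2 j = t j + ε₂ := by simp [ht2, hji]
    have ht2m : ∀ m, m ≠ i → m ≠ j → t2 m = t m := by intro m h1 h2; simp [ht2, h1, h2]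
    have hbd1 : ∀ m, 0 ≤ t1 m ∧ t1 m ≤ 1 := by
      intro m
      by_cases h1 : m = i
      · subst h1; rw [ht1i]
        constructor
        · linarith [(hbd m).1]
        · have := min_le_left (1 - t m) (t j); linarith
      by_cases h2 : m = j
      · subst h2; rw [ht1j]
        constructor
        · have := min_le_right (1 - t i) (t m); linarith
        · linarith [(hbd m).2]
      · rw [ht1m m h1 h2]; exact hbd m
    have hbd2 : ∀ m, 0 ≤ t2 m ∧ t2 m ≤ 1 := by
      intro m
      by_cases h1 : m = i
      · subst h1; rw [ht2i]
        constructor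
        · have := min_le_left (t m) (1 - t j); linarith
        · linarith [(hbd m).2]
      by_cases h2 : m = j
      · subst h2; rw [ht2j]
        constructor
        · linarith [(hbd m).1]
        · have := min_le_right (t i) (1 - t m); linarith
      · rw [ht2m m h1 h2]; exact hbd m
    have hsum1 : ∑ m, t1 m = (k : ℝ) := by
      simp [ht1, Finset.sum_add_distrib, Finset.sum_sub_distrib, Finset.sum_ite_eq', hsum]
    have hsum2 : ∑ m, t2 m = (k : ℝ) := by
      simp [ht2, Finset.sum_add_distrib, Finset.sum_sub_distrib, Finset.sum_ite_eq', hsum]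
    -- cardinal decrease
    have hmemi : i ∈ univ.filter fun m => 0 < t m ∧ t m < 1 := by
      simp [hi0, hi1]
    have hmemj : j ∈ univ.filter fun m => 0 < t m ∧ t m < 1 := by
      simp [hj0, hj1]
    have hsubset : ∀ (s : Fin n → ℝ), (∀ m, m ≠ i → m ≠ j → s m = t m) →
        (univ.filter fun m => 0 < s m ∧ s m < 1) ⊆ (univ.filter fun m => 0 < t m ∧ t m < 1) := by
      intro s hs m hm
      by_cases h1 : m = i
      · subst h1; exact hmemi
      by_cases h2 : m = j
      · subst h2; exact hmemj
      · rw [Finset.mem_filter] at hm ⊢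
        rw [hs m h1 h2] at hm
        exact hm
    have hcard1 : (univ.filter fun m => 0 < t1 m ∧ t1 m < 1).card < N := by
      rw [← hcard]
      apply Finset.card_lt_card
      constructor
      · exact hsubset t1 ht1m
      · intro hcon
        rcases le_total (1 - t i) (t j) with h | h
        · have h1 : t1 i = 1 := by rw [ht1i, hε₁, min_eq_left h]; ring
          have := hcon hmemi
          rw [Finset.mem_filter, h1] at this
          exact absurd this.2.2 (lt_irrefl 1)
        · have h1 : t1 j = 0 := by rw [ht1j, hε₁, min_eq_right h]; ring
          have := hcon hmemj
          rw [Finset.mem_filter, h1] at this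
          exact absurd this.2.1 (lt_irrefl 0)
    have hcard2 : (univ.filter fun m => 0 < t2 m ∧ t2 m < 1).card < N := by
      rw [← hcard]
      apply Finset.card_lt_card
      constructor
      · exact hsubset t2 ht2m
      · intro hcon
        rcases le_total (t i) (1 - t j) with h | h
        · have h1 : t2 i = 0 := by rw [ht2i, hε₂, min_eq_left h]; ring
          have := hcon hmemi
          rw [Finset.mem_filter, h1] at this
          exact absurd this.2.1 (lt_irrefl 0)
        · have h1 : t2 j = 1 := by rw [ht2j, hε₂, min_eq_right h]; ring
          have := hcon hmemj
          rw [Finset.mem_filter, h1] at this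
          exact absurd this.2.2 (lt_irrefl 1)
    obtain ⟨Q₁, hQ₁, hsp₁⟩ := IH _ hcard1 t1 rfl hbd1 hsum1
    obtain ⟨Q₂, hQ₂, hsp₂⟩ := IH _ hcard2 t2 rfl hbd2 hsum2
    set lam := ε₂ / (ε₁ + ε₂) with hlam
    have hε12 : 0 < ε₁ + ε₂ := by linarith
    have hlam0 : 0 ≤ lam := div_nonneg hε₂0.le hε12.le
    have hlam1 : lam ≤ 1 := by
      rw [hlam, div_le_one hε12]; linarith
    have hkey : lam * ε₁ = (1 - lam) * ε₂ := by
      rw [hlam]; field_simp; ring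
    refine ⟨fun a => lam * Q₁ a + (1 - lam) * Q₂ a, ⟨fun b =>
      add_nonneg (mul_nonneg hlam0 (hQ₁.1 b)) (mul_nonneg (by linarith) (hQ₂.1 b)), by
      rw [Finset.sum_add_distrib, ← Finset.mul_sum, ← Finset.mul_sum, hQ₁.2, hQ₂.2]; ring⟩, ?_⟩
    intro m
    rw [succProb_comb, hsp₁, hsp₂]
    by_cases h1 : m = i
    · subst h1; rw [ht1i, ht2i]; linear_combination hkey
    by_cases h2 : m = j
    · subst h2; rw [ht1j, ht2j]; linear_combination -hkey
    · rw [ht1m m h1 h2, ht2m m h1 h2]; ring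

lemma alphaLoss_antitone {α : ℝ} (hα : 0 < α) (hα1 : α ≠ 1) {t t' : ℝ}
    (ht : 0 ≤ t) (htt' : t ≤ t') : alphaLoss α t' ≤ alphaLoss α t := by
  rcases lt_or_gt_of_ne hα1 with hlt | hgt
  · by_cases h0 : t = 0
    · have h : alphaLoss α t = ⊤ := by simp [alphaLoss, h0, hlt]
      rw [h]; exact le_top
    · have ht0 : 0 < t := lt_of_le_of_ne ht (Ne.symm h0)
      have ht'0 : t' ≠ 0 := (lt_of_lt_of_le ht0 htt').ne'
      rw [alphaLoss, alphaLoss, if_neg (fun h => ht'0 h.1), if_neg (fun h => h0 h.1)]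
      apply ENNReal.ofReal_le_ofReal
      have hc : α / (α - 1) ≤ 0 := div_nonpos_of_nonneg_of_nonpos hα.le (by linarith)
      have he : (α - 1) / α ≤ 0 := div_nonpos_of_nonpos_of_nonneg (by linarith) hα.le
      have hr : t' ^ ((α - 1) / α) ≤ t ^ ((α - 1) / α) :=
        Real.rpow_le_rpow_of_nonpos ht0 htt' he
      exact mul_le_mul_of_nonpos_left (by linarith) hc
  · have h1 : ¬ (α < 1) := by linarith
    rw [alphaLoss, alphaLoss, if_neg (fun h => h1 h.2), if_neg (fun h => h1 h.2)]
    apply ENNReal.ofReal_le_ofReal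
    have hc : 0 ≤ α / (α - 1) := div_nonneg hα.le (by linarith)
    have he : 0 ≤ (α - 1) / α := div_nonneg (by linarith) hα.le
    have hr : t ^ ((α - 1) / α) ≤ t' ^ ((α - 1) / α) := Real.rpow_le_rpow ht htt' he
    exact mul_le_mul_of_nonneg_left (by linarith) hc

lemma pad {n k : ℕ} (hkn : k < n) (t : Fin n → ℝ) (hbd : ∀ i, 0 ≤ t i ∧ t i ≤ 1)
    (hsum : ∑ i, t i ≤ k) :
    ∃ t' : Fin n → ℝ, (∑ i, t' i = k) ∧ (∀ i, 0 ≤ t' i ∧ t' i ≤ 1) ∧ ∀ i, t i ≤ t' i := by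
  set s := ∑ i, t i with hs
  have hsn : s < n := lt_of_le_of_lt hsum (by exact_mod_cast hkn)
  set lam := ((k : ℝ) - s) / ((n : ℝ) - s) with hlam
  have hden : 0 < (n : ℝ) - s := by linarith
  have hlam0 : 0 ≤ lam := div_nonneg (by linarith) hden.le
  have hlam1 : lam ≤ 1 := by
    rw [hlam, div_le_one hden]
    have : (k:ℝ) ≤ (n:ℝ) := by exact_mod_cast hkn.le
    linarith
  refine ⟨fun i => t i + lam * (1 - t i), ?_, ?_, ?_⟩
  · have : ∑ i, (t i + lam * (1 - t i)) = s + lam * ((n : ℝ) - s) := by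
      rw [Finset.sum_add_distrib, ← Finset.mul_sum, Finset.sum_sub_distrib]
      simp [← hs]
    rw [this, hlam]
    field_simp
    ring
  · intro i
    dsimp only
    constructor
    · have := (hbd i).1; have := (hbd i).2; nlinarith
    · have h1 : lam * (1 - t i) ≤ 1 * (1 - t i) :=
        mul_le_mul_of_nonneg_right hlam1 (by linarith [(hbd i).2])
      linarith
  · intro i
    dsimp only
    have := (hbd i).2
    nlinarith

lemma succProb_nonneg {n k : ℕ} {Q : (Fin k → Fin n) → ℝ} (hQ : IsStrategy Q) (i : Fin n) :
    0 ≤ succProb Q i :=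
  Finset.sum_nonneg fun a _ => hQ.1 a

lemma sum_succProb_le {n k : ℕ} {Q : (Fin k → Fin n) → ℝ} (hQ : IsStrategy Q) :
    ∑ i, succProb Q i ≤ (k : ℝ) := by
  have h1 : ∑ i, succProb Q i =
      ∑ a : Fin k → Fin n, ((univ.filter fun i => ∃ j, a j = i).card : ℝ) * Q a := by
    unfold succProb
    simp_rw [Finset.sum_filter]
    rw [Finset.sum_comm]
    apply Finset.sum_congr rfl
    intro a _
    rw [← Finset.sum_filter, Finset.sum_const, nsmul_eq_mul]
  rw [h1]
  calc ∑ a : Fin k → Fin n, ((univ.filter fun i => ∃ j, a j = i).card : ℝ) * Q a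
      ≤ ∑ a : Fin k → Fin n, (k : ℝ) * Q a := by
        apply Finset.sum_le_sum
        intro a _
        apply mul_le_mul_of_nonneg_right _ (hQ.1 a)
        have : (univ.filter fun i => ∃ j, a j = i) = Finset.image a univ := by
          ext i; simp [eq_comm]
        rw [this]
        exact_mod_cast (Finset.card_image_le).trans (by simp)
    _ = (k : ℝ) := by rw [← Finset.mul_sum, hQ.2, mul_one]


/-- The minimal expected `α`-loss for `k` guesses equals the value of the
finite-dimensional optimization problem over vectors `t ∈ [0,1]^n` with `Σ t_i = k`,
with objective `(α/(α-1)) Σ_i p_i (1 - t_i^{(α-1)/α}) = Σ_i p_i ℓ_α(t_i)`. -/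
theorem minimal_alpha_loss_eq_finite_dim_min
    {n k : ℕ} (hk1 : 1 ≤ k) (hkn : k < n)
    (α : ℝ) (hα : 0 < α) (hα1 : α ≠ 1)
    (p : Fin n → ℝ) (hp0 : ∀ i, 0 < p i) (hp1 : ∑ i, p i = 1) :
    sInf {E : ℝ≥0∞ | ∃ Q : (Fin k → Fin n) → ℝ, IsStrategy Q ∧
        E = ∑ i, ENNReal.ofReal (p i) * alphaLoss α (succProb Q i)} =
      sInf {E : ℝ≥0∞ | ∃ t : Fin n → ℝ,
        (∑ i, t i = k) ∧ (∀ i, 0 ≤ t i ∧ t i ≤ 1) ∧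
        E = ∑ i, ENNReal.ofReal (p i) * alphaLoss α (t i)} := by
  apply le_antisymm
  · -- every feasible t is achieved by a strategy
    apply sInf_le_sInf
    rintro E ⟨t, hsum, hbd, rfl⟩
    obtain ⟨Q, hQ, hsp⟩ := achieve _ t rfl hbd hsum
    exact ⟨Q, hQ, by simp [hsp]⟩
  · -- every strategy is dominated by a feasible t
    apply le_sInf
    rintro E ⟨Q, hQ, rfl⟩
    have hbd : ∀ i, 0 ≤ succProb Q i ∧ succProb Q i ≤ 1 := by
      intro i
      refine ⟨succProb_nonneg hQ i, ?_⟩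
      rw [← hQ.2]
      exact Finset.sum_le_sum_of_subset_of_nonneg (Finset.filter_subset _ _)
        (fun a _ _ => hQ.1 a)
    obtain ⟨t', hsum', hbd', hle'⟩ := pad hkn (succProb Q) hbd (sum_succProb_le hQ)
    refine le_trans (sInf_le ⟨t', hsum', hbd', rfl⟩) ?_
    apply Finset.sum_le_sum
    intro i _
    exact mul_le_mul_right (alphaLoss_antitone hα hα1 (hbd i).1 (hle' i)) _
end

section
/- Let p_1 ≥ p_2 ≥ ... ≥ p_n > 0 with Σ p_i = 1, let 1 ≤ k < n, let α ∈ (0,1)∪(1,∞), and let s* = min{ r ∈ {1,...,k} : (k−r+1)·p_r^α / Σ_{i=r}^{n} p_i^α ≤ 1 }. Define t*_i = 1 for i ∈ [1:s*−1] and t*_i = (k−s*+1)·p_i^α / Σ_{j=s*}^{n} p_j^α for i ∈ [s*:n]. Then (t*_1,...,t*_n) satisfies 0 ≤ t*_i ≤ 1 for all i and Σ_{i=1}^{n} t*_i = k, and it attains the minimum of (α/(α−1)) · Σ_{i=1}^{n} p_i · (1 − t_i^{(α−1)/α}) over all (t_1,...,t_n) with Σ t_i = k and 0 ≤ t_i ≤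 1. -/
open Finset
open scoped ENNReal

/-- Gradient inequality for `x ↦ x^β` around `u`. -/
lemma bern_aux {β u t : ℝ} (hβ : β < 0 ∨ (0 < β ∧ β < 1)) (hu : 0 < u) (ht : 0 ≤ t)
    (ht' : β < 0 → 0 < t) :
    (t ^ β - u ^ β) / β ≤ u ^ (β - 1) * (t - u) := by
  set x : ℝ := t / u with hxdef
  have hx0 : 0 ≤ x := div_nonneg ht hu.le
  have htx : t = u * x := by rw [hxdef]; field_simp
  have hub : u ^ β > 0 := Real.rpow_pos_of_pos hu β
  have ht_eq : t ^ β = u ^ β * x ^ β := by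
    rw [htx, Real.mul_rpow hu.le hx0]
  have hrhs : u ^ (β - 1) * (t - u) = u ^ β * (x - 1) := by
    rw [Real.rpow_sub hu, Real.rpow_one, htx]
    field_simp
  rw [ht_eq, hrhs]
  have hcore : (x ^ β - 1) / β ≤ x - 1 := by
    rcases hβ with hβ | ⟨hβ0, hβ1⟩
    · have hx : 0 < x := div_pos (ht' hβ) hu
      have h1 : Real.log x ≤ x - 1 := Real.log_le_sub_one_of_pos hx
      have h2 : β * Real.log x + 1 ≤ x ^ β := by
        rw [Real.rpow_def_of_pos hx, mul_comm]
        exact Real.add_one_le_exp _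
      have h3 : β * (x - 1) ≤ β * Real.log x :=
        mul_le_mul_of_nonpos_left h1 hβ.le
      rw [div_le_iff_of_neg hβ]
      nlinarith
    · have h1 : (1 + (x - 1)) ^ β ≤ 1 + β * (x - 1) :=
        rpow_one_add_le_one_add_mul_self (by linarith) hβ0.le hβ1.le
      rw [show (1 : ℝ) + (x - 1) = x by ring] at h1
      rw [div_le_iff₀ hβ0]
      nlinarith
  calc (u ^ β * x ^ β - u ^ β) / β = u ^ β * ((x ^ β - 1) / β) := by ring
    _ ≤ u ^ β * (x - 1) := by
        exact mul_le_mul_of_nonneg_left hcore hub.le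

set_option maxHeartbeats 1000000 in
/-- The optimizer of the finite-dimensional problem: `t*_i = 1` for `i ≤ s* − 1` and
`t*_i = (k−s*+1)·p_i^α / Σ_{j=s*}^n p_j^α` for `i ≥ s*` is feasible (entries in `[0,1]`
summing to `k`) and attains the minimum of the expected `α`-loss objective
`Σ_i p_i ℓ_α(t_i)` over all feasible `t`.  Indices are 1-based: `p i` for
`i ∈ {1, …, n}`. -/
theorem optimal_vector_attains_minimum
    (n k : ℕ) (hk1 : 1 ≤ k) (hkn : k < n)
    (α : ℝ) (hα : 0 < α) (hα1 : α ≠ 1)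
    (p : ℕ → ℝ) (hp0 : ∀ i ∈ Finset.Icc 1 n, 0 < p i)
    (hp1 : ∑ i ∈ Finset.Icc 1 n, p i = 1)
    (hsorted : ∀ i j, 1 ≤ i → i ≤ j → j ≤ n → p j ≤ p i)
    (s : ℕ)
    (hs : IsLeast {r : ℕ | r ∈ Finset.Icc 1 k ∧
        ((k : ℝ) - r + 1) * p r ^ α / (∑ i ∈ Finset.Icc r n, p i ^ α) ≤ 1} s)
    (tstar : ℕ → ℝ)
    (htstar : ∀ i, tstar i =
      if i < s then 1
      else ((k : ℝ) - s + 1) * p i ^ α / (∑ j ∈ Finset.Icc s n, p j ^ α)) :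
    (∀ i ∈ Finset.Icc 1 n, 0 ≤ tstar i ∧ tstar i ≤ 1) ∧
    (∑ i ∈ Finset.Icc 1 n, tstar i = k) ∧
    (∀ t : ℕ → ℝ, (∑ i ∈ Finset.Icc 1 n, t i = k) →
      (∀ i ∈ Finset.Icc 1 n, 0 ≤ t i ∧ t i ≤ 1) →
      (∑ i ∈ Finset.Icc 1 n, ENNReal.ofReal (p i) * alphaLoss α (tstar i)) ≤
        ∑ i ∈ Finset.Icc 1 n, ENNReal.ofReal (p i) * alphaLoss α (t i)) := by
  obtain ⟨⟨hsmem, hscond⟩, hsmin⟩ := hs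
  rw [Finset.mem_Icc] at hsmem
  obtain ⟨hs1, hsk⟩ := hsmem
  have hsn : s ≤ n := hsk.trans hkn.le
  have hα0 : α ≠ 0 := hα.ne'
  have hαm1 : α - 1 ≠ 0 := sub_ne_zero.mpr hα1
  set β : ℝ := (α - 1) / α with hβdef
  have hβne : β ≠ 0 := div_ne_zero hαm1 hα0
  have hβcase : β < 0 ∨ (0 < β ∧ β < 1) := by
    rcases lt_or_gt_of_ne hα1 with h | h
    · exact Or.inl (div_neg_of_neg_of_pos (by linarith) hα)
    · exact Or.inr ⟨div_pos (by linarith) hα, (div_lt_one hα).mpr (by linarith)⟩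
  have hαβ : α * (β - 1) = -1 := by
    rw [hβdef]; field_simp; ring
  have h1β : α / (α - 1) = 1 / β := by
    rw [hβdef, one_div_div]
  set S : ℝ := ∑ j ∈ Finset.Icc s n, p j ^ α with hSdef
  have hS : 0 < S := by
    apply Finset.sum_pos
    · intro i hi
      rw [Finset.mem_Icc] at hi
      exact Real.rpow_pos_of_pos (hp0 i (Finset.mem_Icc.mpr ⟨hs1.trans hi.1, hi.2⟩)) α
    · exact ⟨s, Finset.mem_Icc.mpr ⟨le_refl s, hsn⟩⟩
  set c : ℝ := ((k : ℝ) - s + 1) / S with hcdef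
  have hks : (s : ℝ) ≤ (k : ℝ) := Nat.cast_le.mpr hsk
  have hc : 0 < c := div_pos (by linarith) hS
  have hform : ∀ x : ℝ, ((k : ℝ) - s + 1) * x / S = c * x := by
    intro x; rw [hcdef]; ring
  -- tstar values
  have hts_lt : ∀ i, i < s → tstar i = 1 := by
    intro i hi; rw [htstar i, if_pos hi]
  have hts_ge : ∀ i, s ≤ i → tstar i = c * p i ^ α := by
    intro i hi; rw [htstar i, if_neg (not_lt.mpr hi), hform]
  have hcps : c * p s ^ α ≤ 1 := by
    rw [← hform]; exact hscond
  have hts_pos : ∀ i ∈ Finset.Icc 1 n, 0 < tstar i := by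
    intro i hi
    rw [Finset.mem_Icc] at hi
    rcases lt_or_ge i s with h | h
    · rw [hts_lt i h]; norm_num
    · rw [hts_ge i h]
      exact mul_pos hc (Real.rpow_pos_of_pos (hp0 i (Finset.mem_Icc.mpr hi)) α)
  have hts_le : ∀ i ∈ Finset.Icc 1 n, tstar i ≤ 1 := by
    intro i hi
    rw [Finset.mem_Icc] at hi
    rcases lt_or_ge i s with h | h
    · rw [hts_lt i h]
    · rw [hts_ge i h]
      have hpi : p i ≤ p s := hsorted s i hs1 h hi.2
      have : p i ^ α ≤ p s ^ α :=
        Real.rpow_le_rpow (hp0 i (Finset.mem_Icc.mpr hi)).le hpi hα.le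
      calc c * p i ^ α ≤ c * p s ^ α := mul_le_mul_of_nonneg_left this hc.le
        _ ≤ 1 := hcps
  -- sum of tstar
  have hsum_t : ∑ i ∈ Finset.Icc 1 n, tstar i = k := by
    have hsplit : ∑ i ∈ Finset.Ico 1 s, tstar i + ∑ i ∈ Finset.Ico s (n + 1), tstar i
        = ∑ i ∈ Finset.Ico 1 (n + 1), tstar i :=
      Finset.sum_Ico_consecutive _ hs1 (by omega)
    rw [← Finset.Ico_add_one_right_eq_Icc, ← hsplit]
    have h1 : ∑ i ∈ Finset.Ico 1 s, tstar i = (s : ℝ) - 1 := by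
      rw [Finset.sum_congr rfl (fun i hi => hts_lt i (Finset.mem_Ico.mp hi).2)]
      rw [Finset.sum_const, Nat.card_Ico, nsmul_eq_mul, mul_one, Nat.cast_sub hs1,
        Nat.cast_one]
    have h2 : ∑ i ∈ Finset.Ico s (n + 1), tstar i = (k : ℝ) - s + 1 := by
      rw [Finset.Ico_add_one_right_eq_Icc]
      rw [Finset.sum_congr rfl (fun i hi => hts_ge i (Finset.mem_Icc.mp hi).1)]
      rw [← Finset.mul_sum, ← hSdef, hcdef, div_mul_cancel₀ _ hS.ne']
    rw [h1, h2]; ring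
  refine ⟨fun i hi => ⟨(hts_pos i hi).le, hts_le i hi⟩, hsum_t, ?_⟩
  -- minimality consequence: c * p i ^ α ≥ 1 for 1 ≤ i < s
  have hcpi : ∀ i, 1 ≤ i → i < s → 1 ≤ c * p i ^ α := by
    intro i h1i his
    have hs2 : 2 ≤ s := by omega
    set r := s - 1 with hrdef
    have hr1 : 1 ≤ r := by omega
    have hrk : r ≤ k := by omega
    have hrn : r ≤ n := by omega
    have hrs : r < s := by omega
    have hrcond : ¬ (((k : ℝ) - r + 1) * p r ^ α / (∑ j ∈ Finset.Icc r n, p j ^ α) ≤ 1) := by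
      intro hcond
      have hle := hsmin ⟨Finset.mem_Icc.mpr ⟨hr1, hrk⟩, hcond⟩
      omega
    push_neg at hrcond
    have hSr : ∑ j ∈ Finset.Icc r n, p j ^ α = p r ^ α + S := by
      rw [← Finset.Ico_add_one_right_eq_Icc, Finset.sum_eq_sum_Ico_succ_bot (by omega : r < n + 1)]
      rw [Finset.Ico_add_one_right_eq_Icc, hSdef, show r + 1 = s by omega]
    have hSrpos : 0 < p r ^ α + S := by
      have := Real.rpow_pos_of_pos (hp0 r (Finset.mem_Icc.mpr ⟨hr1, hrn⟩)) α
      linarith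
    rw [hSr] at hrcond
    have hgt : p r ^ α + S < ((k : ℝ) - r + 1) * p r ^ α :=
      (one_lt_div hSrpos).mp hrcond
    have hrcast : (r : ℝ) = (s : ℝ) - 1 := by
      rw [hrdef, Nat.cast_sub hs1, Nat.cast_one]
    have hkey : S < ((k : ℝ) - s + 1) * p r ^ α := by
      rw [hrcast] at hgt; nlinarith
    have hcr : 1 < c * p r ^ α := by
      rw [hcdef, div_mul_eq_mul_div, lt_div_iff₀ hS, one_mul]
      exact hkey
    have hpr : p r ^ α ≤ p i ^ α := by
      apply Real.rpow_le_rpow (hp0 r (Finset.mem_Icc.mpr ⟨hr1, hrn⟩)).le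
        (hsorted i r h1i (by omega) hrn) hα.le
    nlinarith
  -- the loss in real terms
  set L : ℝ → ℝ := fun t => (α / (α - 1)) * (1 - t ^ β) with hLdef
  have hLnn : ∀ t : ℝ, 0 ≤ t → t ≤ 1 → (α < 1 → 0 < t) → 0 ≤ L t := by
    intro t ht0 ht1 ht'
    rw [hLdef]
    rcases lt_or_gt_of_ne hα1 with h | h
    · have h1 : 1 ≤ t ^ β :=
        Real.one_le_rpow_of_pos_of_le_one_of_nonpos (ht' h) ht1
          (by rcases hβcase with hb | hb; · exact hb.le
              · exfalso; rcases hb with ⟨hb0, _⟩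
                have : β < 0 := div_neg_of_neg_of_pos (by linarith) hα
                linarith)
      have h2 : α / (α - 1) ≤ 0 :=
        div_nonpos_of_nonneg_of_nonpos hα.le (by linarith)
      nlinarith
    · have hβ0 : 0 < β := div_pos (by linarith) hα
      have h1 : t ^ β ≤ 1 := Real.rpow_le_one ht0 ht1 hβ0.le
      have h2 : 0 ≤ α / (α - 1) := div_nonneg hα.le (by linarith)
      nlinarith
  set μ : ℝ := c ^ (β - 1) with hμdef
  -- per-coordinate gradient bound
  have hgrad : ∀ i ∈ Finset.Icc 1 n, ∀ ti : ℝ, 0 ≤ ti → ti ≤ 1 → (α < 1 → 0 < ti) →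
      p i * L (tstar i) - μ * (ti - tstar i) ≤ p i * L ti := by
    intro i hi ti hti0 hti1 hti'
    have hpi : 0 < p i := hp0 i hi
    rw [Finset.mem_Icc] at hi
    have hti'' : β < 0 → 0 < ti := by
      intro hb
      apply hti'
      rcases lt_or_gt_of_ne hα1 with h | h
      · exact h
      · exfalso
        have : 0 < β := div_pos (by linarith) hα
        linarith
    have hu : 0 < tstar i := hts_pos i (Finset.mem_Icc.mpr hi)
    have hber := bern_aux hβcase hu hti0 hti''
    have hdiff : L (tstar i) - L ti = (ti ^ β - (tstar i) ^ β) / β := by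
      rw [hLdef]; simp only [h1β]; field_simp; ring
    have hstep : p i * (L (tstar i) - L ti) ≤ p i * ((tstar i) ^ (β - 1) * (ti - tstar i)) := by
      rw [hdiff]
      exact mul_le_mul_of_nonneg_left hber hpi.le
    -- now compare p i * (tstar i)^(β-1) * (ti - tstar i) with μ * (ti - tstar i)
    have hβ1neg : β - 1 < 0 := by
      rcases hβcase with hb | hb
      · linarith
      · linarith [hb.2]
    rcases lt_or_ge i s with h | h
    · -- tstar i = 1, need p i ≥ μ and ti - 1 ≤ 0
      have h1 : tstar i = 1 := hts_lt i h
      have hc1 : 1 ≤ c * p i ^ α := hcpi i hi.1 h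
      have hμp : μ ≤ p i := by
        have hpa : 0 < p i ^ α := Real.rpow_pos_of_pos hpi α
        have hcge : p i ^ (-α) ≤ c := by
          rw [Real.rpow_neg hpi.le, inv_le_iff_one_le_mul₀' hpa]
          linarith [hc1]
        have hmono : c ^ (β - 1) ≤ (p i ^ (-α)) ^ (β - 1) :=
          Real.rpow_le_rpow_of_nonpos (Real.rpow_pos_of_pos hpi (-α)) hcge hβ1neg.le
        have hpp : (p i ^ (-α)) ^ (β - 1) = p i := by
          rw [← Real.rpow_mul hpi.le, show -α * (β - 1) = 1 by rw [neg_mul]; linarith [hαβ],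
            Real.rpow_one]
        rw [hμdef]
        rw [hpp] at hmono
        exact hmono
      have hfin : μ * (ti - tstar i) ≥ p i * ((tstar i) ^ (β - 1) * (ti - tstar i)) := by
        rw [h1, Real.one_rpow, one_mul]
        have htile : ti - 1 ≤ 0 := by linarith
        nlinarith
      linarith [hstep]
    · -- tstar i = c * p i ^ α, here p i * (tstar i)^(β-1) = μ exactly
      have h1 : tstar i = c * p i ^ α := hts_ge i h
      have hpa : 0 ≤ p i ^ α := (Real.rpow_pos_of_pos hpi α).le
      have heq : p i * (tstar i) ^ (β - 1) = μ := by
        rw [h1, Real.mul_rpow hc.le hpa, ← Real.rpow_mul hpi.le, hαβ,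
          Real.rpow_neg_one, hμdef]
        field_simp
      have : p i * ((tstar i) ^ (β - 1) * (ti - tstar i)) = μ * (ti - tstar i) := by
        rw [← heq]; ring
      linarith [hstep, this.le]
  -- now prove the optimality statement
  intro t htsum htfeas
  -- case split on whether some t i = 0 with α < 1
  by_cases hzero : ∃ i ∈ Finset.Icc 1 n, t i = 0 ∧ α < 1
  · obtain ⟨i₀, hi₀, hz⟩ := hzero
    have : alphaLoss α (t i₀) = ⊤ := by rw [alphaLoss, if_pos hz]
    have hterm : ENNReal.ofReal (p i₀) * alphaLoss α (t i₀) = ⊤ := by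
      rw [this, ENNReal.mul_top]
      exact (ENNReal.ofReal_pos.mpr (hp0 i₀ hi₀)).ne'
    have : (⊤ : ℝ≥0∞) ≤ ∑ i ∈ Finset.Icc 1 n, ENNReal.ofReal (p i) * alphaLoss α (t i) := by
      rw [← hterm]
      exact Finset.single_le_sum (f := fun i => ENNReal.ofReal (p i) * alphaLoss α (t i))
        (fun i _ => zero_le) hi₀
    exact le_top.trans this
  · push_neg at hzero
    have hnz : ∀ i ∈ Finset.Icc 1 n, α < 1 → 0 < t i := by
      intro i hi hα'
      rcases (htfeas i hi).1.lt_or_eq with h | h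
      · exact h
      · exact absurd hα' (not_lt.mpr (hzero i hi h.symm))
    -- rewrite both sides as ofReal of real sums
    have hconv : ∀ (u : ℕ → ℝ), (∀ i ∈ Finset.Icc 1 n, 0 ≤ u i ∧ u i ≤ 1) →
        (∀ i ∈ Finset.Icc 1 n, α < 1 → 0 < u i) →
        ∑ i ∈ Finset.Icc 1 n, ENNReal.ofReal (p i) * alphaLoss α (u i)
          = ENNReal.ofReal (∑ i ∈ Finset.Icc 1 n, p i * L (u i)) := by
      intro u hfeas hpos
      rw [ENNReal.ofReal_sum_of_nonneg]
      · apply Finset.sum_congr rfl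
        intro i hi
        have hni : ¬ (u i = 0 ∧ α < 1) := by
          rintro ⟨h0, h1⟩
          exact absurd h0 (hpos i hi h1).ne'
        rw [alphaLoss, if_neg hni, ← ENNReal.ofReal_mul (hp0 i hi).le]
      · intro i hi
        exact mul_nonneg (hp0 i hi).le
          (hLnn (u i) (hfeas i hi).1 (hfeas i hi).2 (hpos i hi))
    rw [hconv tstar (fun i hi => ⟨(hts_pos i hi).le, hts_le i hi⟩)
        (fun i hi _ => hts_pos i hi),
      hconv t htfeas hnz]
    apply ENNReal.ofReal_le_ofReal
    -- the real inequality
    have hkey : ∀ i ∈ Finset.Icc 1 n,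
        p i * L (tstar i) - μ * (t i - tstar i) ≤ p i * L (t i) := by
      intro i hi
      exact hgrad i hi (t i) (htfeas i hi).1 (htfeas i hi).2 (hnz i hi)
    calc ∑ i ∈ Finset.Icc 1 n, p i * L (tstar i)
        = ∑ i ∈ Finset.Icc 1 n, (p i * L (tstar i) - μ * (t i - tstar i)) := by
          rw [Finset.sum_sub_distrib, ← Finset.mul_sum, Finset.sum_sub_distrib,
            htsum, hsum_t, sub_self, mul_zero, sub_zero]
      _ ≤ ∑ i ∈ Finset.Icc 1 n, p i * L (t i) := Finset.sum_le_sum hkey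
end
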